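/- For every f in C_Z([0,1]) (continuous on [0,1] with f(0), f(1) integers) and every natural n >= 2, and every integer t with 0 <= t <= n/2, there exist integers q_0,...,q_n such that sup_{x in [0,1]} |f(x) - sum_{k=0}^n q_k binom(n,k) x^k (1-x)^(n-k)| <= (5/4) omega_f(n^{-1/2}) + max(omega_f(t/n), 1/(2(n+1-2t))) + 1/sqrt(2(t+1)). -/

import Mathlib

/-- Modulus of continuity of `f` on `[0,1]`. -/
noncomputable def modCont (f : ℝ → ℝ) (δ : ℝ) : ℝ :=
  sSup {d : ℝ | ∃ x ∈ Set.Icc (0:ℝ) 1, ∃ y ∈ Set.Icc (0:ℝ) 1,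
    |x - y| ≤ δ ∧ d = |f x - f y|}

open Finset Stirling

noncomputable def bp (n k : ℕ) (x : ℝ) : ℝ := (n.choose k : ℝ) * x ^ k * (1 - x) ^ (n - k)

lemma bp_nonneg {n k : ℕ} {x : ℝ} (h0 : 0 ≤ x) (h1 : x ≤ 1) : 0 ≤ bp n k x := by
  have h2 : (0:ℝ) ≤ 1 - x := by linarith
  unfold bp; positivity

lemma bp_eval (n k : ℕ) (x : ℝ) : (bernsteinPolynomial ℝ n k).eval x = bp n k x := by
  simp [bernsteinPolynomial, bp]

lemma bp_sum (n : ℕ) (x : ℝ) : ∑ k ∈ range (n+1), bp n k x = 1 := by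
  have h := congrArg (Polynomial.eval x) (bernsteinPolynomial.sum ℝ n)
  rw [Polynomial.eval_finset_sum] at h
  simpa [bp_eval] using h

lemma bp_var (n : ℕ) (x : ℝ) :
    ∑ k ∈ range (n+1), ((n:ℝ) * x - k)^2 * bp n k x = (n:ℝ) * x * (1 - x) := by
  have h := congrArg (Polynomial.eval x) (bernsteinPolynomial.variance ℝ n)
  rw [Polynomial.eval_finset_sum] at h
  simpa [bp_eval, nsmul_eq_mul] using h

variable {f : ℝ → ℝ}

lemma modCont_bddAbove (hf : ContinuousOn f (Set.Icc (0:ℝ) 1)) (δ : ℝ) :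
    BddAbove {d : ℝ | ∃ x ∈ Set.Icc (0:ℝ) 1, ∃ y ∈ Set.Icc (0:ℝ) 1,
      |x - y| ≤ δ ∧ d = |f x - f y|} := by
  obtain ⟨C, hC⟩ := isCompact_Icc.exists_bound_of_continuousOn hf
  refine ⟨2*C, ?_⟩
  rintro d ⟨x, hx, y, hy, -, rfl⟩
  have h1 := hC x hx
  have h2 := hC y hy
  rw [Real.norm_eq_abs] at h1 h2
  calc |f x - f y| ≤ |f x| + |f y| := abs_sub _ _
    _ ≤ 2*C := by linarith

lemma modCont_pair (hf : ContinuousOn f (Set.Icc (0:ℝ) 1)) {δ x y : ℝ}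
    (hx : x ∈ Set.Icc (0:ℝ) 1) (hy : y ∈ Set.Icc (0:ℝ) 1) (h : |x - y| ≤ δ) :
    |f x - f y| ≤ modCont f δ :=
  le_csSup (modCont_bddAbove hf δ) ⟨x, hx, y, hy, h, rfl⟩

lemma modCont_nonneg (hf : ContinuousOn f (Set.Icc (0:ℝ) 1)) {δ : ℝ} (hδ : 0 ≤ δ) :
    0 ≤ modCont f δ := by
  have := modCont_pair hf (Set.mem_Icc.2 ⟨le_refl (0:ℝ), zero_le_one⟩)
    (Set.mem_Icc.2 ⟨le_refl (0:ℝ), zero_le_one⟩) (by simpa using hδ)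
  simpa using this

lemma modCont_chain (hf : ContinuousOn f (Set.Icc (0:ℝ) 1)) {δ : ℝ} (hδ : 0 ≤ δ) :
    ∀ N : ℕ, ∀ x y : ℝ, x ∈ Set.Icc (0:ℝ) 1 → y ∈ Set.Icc (0:ℝ) 1 → x ≤ y →
      y - x ≤ N * δ → |f x - f y| ≤ N * modCont f δ := by
  intro N
  induction N with
  | zero =>
    intro x y hx hy hxy h
    norm_num at h
    have : x = y := le_antisymm hxy (by linarith)
    simp [this]
  | succ N ih =>
    intro x y hx hy hxy h
    set z := max x (y - δ) with hz
    have hxz : x ≤ z := le_max_left _ _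
    have hzy : z ≤ y := max_le hxy (by linarith)
    have hzI : z ∈ Set.Icc (0:ℝ) 1 := ⟨le_trans hx.1 hxz, le_trans hzy hy.2⟩
    have h1 : y - z ≤ δ := by
      have : y - δ ≤ z := le_max_right _ _
      linarith
    have h2 : z - x ≤ N * δ := by
      have hN : (0:ℝ) ≤ N * δ := by positivity
      have : y - δ ≤ x + N * δ := by push_cast at h ⊢; linarith
      have : z ≤ x + N * δ := max_le (by linarith) this
      linarith
    calc |f x - f y| ≤ |f x - f z| + |f z - f y| := abs_sub_le _ _ _
      _ ≤ N * modCont f δ + modCont f δ := by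
          refine add_le_add (ih x z hx hzI hxz h2) (modCont_pair hf hzI hy ?_)
          rw [abs_le]; constructor <;> linarith
      _ = (N+1 : ℕ) * modCont f δ := by push_cast; ring

lemma modCont_quad (hf : ContinuousOn f (Set.Icc (0:ℝ) 1)) {δ x y : ℝ} (hδ : 0 < δ)
    (hx : x ∈ Set.Icc (0:ℝ) 1) (hy : y ∈ Set.Icc (0:ℝ) 1) :
    |f x - f y| ≤ (1 + ((x-y)/δ)^2) * modCont f δ := by
  have hω := modCont_nonneg hf hδ.le
  wlog hxy : x ≤ y generalizing x y
  · have := this hy hx (by linarith)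
    rw [abs_sub_comm] at this
    calc |f x - f y| ≤ (1 + ((y-x)/δ)^2) * modCont f δ := this
      _ = (1 + ((x-y)/δ)^2) * modCont f δ := by ring
  rcases le_or_gt (y - x) δ with hc | hc
  · have := modCont_pair hf hx hy (show |x - y| ≤ δ by rw [abs_le]; constructor <;> linarith)
    nlinarith [sq_nonneg ((x-y)/δ)]
  · set r : ℝ := (y - x)/δ with hr
    have hr1 : 1 < r := (one_lt_div hδ).2 hc
    have hr0 : 0 ≤ r := by linarith
    set N : ℕ := ⌈r⌉₊ with hN
    have hle : y - x ≤ N * δ := by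
      have := Nat.le_ceil r
      calc y - x = r * δ := by rw [hr, div_mul_cancel₀ _ hδ.ne']
        _ ≤ N * δ := by nlinarith
    have hchain := modCont_chain hf hδ.le N x y hx hy (by linarith) hle
    have hNr : (N:ℝ) ≤ 1 + r^2 := by
      have h1 : (N:ℝ) < r + 1 := Nat.ceil_lt_add_one hr0
      nlinarith
    calc |f x - f y| ≤ N * modCont f δ := hchain
      _ ≤ (1 + r^2) * modCont f δ := mul_le_mul_of_nonneg_right hNr hω
      _ = (1 + ((x-y)/δ)^2) * modCont f δ := by rw [hr]; ring_nf

lemma tele (g : ℕ → ℝ) {a b : ℕ} (h : a ≤ b) :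
    ∑ k ∈ Finset.Ico a b, (g (k+1) - g k) = g b - g a := by
  induction b, h using Nat.le_induction with
  | base => simp
  | succ b hb ih => rw [Finset.sum_Ico_succ_top (by omega), ih]; ring

lemma tv (c : ℕ → ℝ) {lo m hi : ℕ} (h1 : lo ≤ m) (h2 : m ≤ hi)
    (hup : ∀ k, lo ≤ k → k < m → c k ≤ c (k+1))
    (hdown : ∀ k, m ≤ k → k < hi → c (k+1) ≤ c k) :
    ∑ k ∈ Finset.Ico lo hi, |c k - c (k+1)| = (c m - c lo) + (c m - c hi) := by
  rw [← Finset.sum_Ico_consecutive _ h1 h2]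
  have e1 : ∑ k ∈ Finset.Ico lo m, |c k - c (k+1)| = c m - c lo := by
    rw [show (∑ k ∈ Finset.Ico lo m, |c k - c (k+1)|)
        = ∑ k ∈ Finset.Ico lo m, (c (k+1) - c k) from
      Finset.sum_congr rfl fun k hk => by
        rw [Finset.mem_Ico] at hk
        rw [abs_sub_comm, abs_of_nonneg (by linarith [hup k hk.1 hk.2])]]
    exact tele c h1
  have e2 : ∑ k ∈ Finset.Ico m hi, |c k - c (k+1)| = c m - c hi := by
    rw [show (∑ k ∈ Finset.Ico m hi, |c k - c (k+1)|)
        = ∑ k ∈ Finset.Ico m hi, ((fun j => -c j) (k+1) - (fun j => -c j) k) from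
      Finset.sum_congr rfl fun k hk => by
        rw [Finset.mem_Ico] at hk
        rw [abs_of_nonneg (by linarith [hdown k hk.1 hk.2])]
        ring]
    rw [tele (fun j => -c j) h2]; ring
  rw [e1, e2]

lemma abel_sum (D c : ℕ → ℝ) {lo hi : ℕ} (hlo : 1 ≤ lo) (h : lo ≤ hi) (hD : D (lo - 1) = 0) :
    ∑ k ∈ Finset.Icc lo hi, (D k - D (k-1)) * c k
      = ∑ k ∈ Finset.Ico lo hi, D k * (c k - c (k+1)) + D hi * c hi := by
  induction hi, h using Nat.le_induction with
  | base => simp [hD]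
  | succ hi hh ih =>
    rw [Finset.sum_Icc_succ_top (by omega : lo ≤ hi + 1), ih, Finset.sum_Ico_succ_top hh]
    simp only [Nat.add_sub_cancel]
    ring

lemma bp_ratio (n k : ℕ) (hk : k < n) (x : ℝ) :
    ((k:ℝ)+1) * (1-x) * bp n (k+1) x = ((n:ℝ) - k) * x * bp n k x := by
  have hc : ((n.choose (k+1) : ℝ)) * ((k:ℝ)+1) = (n.choose k : ℝ) * ((n:ℝ) - k) := by
    have h := congrArg (Nat.cast : ℕ → ℝ) (Nat.choose_succ_right_eq n k)
    push_cast [Nat.cast_sub hk.le] at h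
    linarith [h]
  have hpow : (1-x)^(n-(k+1)) * (1-x) = (1-x)^(n-k) := by
    rw [← pow_succ]; congr 1; omega
  unfold bp
  calc ((k:ℝ)+1) * (1-x) * ((n.choose (k+1) : ℝ) * x^(k+1) * (1-x)^(n-(k+1)))
      = ((n.choose (k+1) : ℝ) * ((k:ℝ)+1)) * x^(k+1) * ((1-x)^(n-(k+1)) * (1-x)) := by ring
    _ = ((n.choose k : ℝ) * ((n:ℝ)-k)) * x^(k+1) * (1-x)^(n-k) := by rw [hc, hpow]
    _ = ((n:ℝ) - k) * x * ((n.choose k : ℝ) * x^k * (1-x)^(n-k)) := by rw [pow_succ]; ring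

lemma bp_up {n k : ℕ} {x : ℝ} (hk : k < n) (h0 : 0 ≤ x) (hx1 : x < 1)
    (hcond : ((k:ℝ)+1) * (1-x) ≤ ((n:ℝ)-k) * x) : bp n k x ≤ bp n (k+1) x := by
  have hpos : 0 < ((k:ℝ)+1) * (1-x) := by
    have : (0:ℝ) < 1 - x := by linarith
    positivity
  have hb := bp_nonneg (n:=n) (k:=k) h0 hx1.le
  have hr := bp_ratio n k hk x
  have h2 : ((k:ℝ)+1) * (1-x) * bp n k x ≤ ((k:ℝ)+1) * (1-x) * bp n (k+1) x := by
    rw [hr]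
    exact mul_le_mul_of_nonneg_right hcond hb
  exact le_of_mul_le_mul_left h2 hpos

lemma bp_down {n k : ℕ} {x : ℝ} (hk : k < n) (h0 : 0 ≤ x) (hx1 : x < 1)
    (hcond : ((n:ℝ)-k) * x ≤ ((k:ℝ)+1) * (1-x)) : bp n (k+1) x ≤ bp n k x := by
  have hpos : 0 < ((k:ℝ)+1) * (1-x) := by
    have : (0:ℝ) < 1 - x := by linarith
    positivity
  have hb := bp_nonneg (n:=n) (k:=k) h0 hx1.le
  have hr := bp_ratio n k hk x
  have h2 : ((k:ℝ)+1) * (1-x) * bp n (k+1) x ≤ ((k:ℝ)+1) * (1-x) * bp n k x := by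
    rw [hr]
    exact mul_le_mul_of_nonneg_right hcond hb
  exact le_of_mul_le_mul_left h2 hpos

lemma bp_unimodal {n lo hi : ℕ} {x : ℝ} (hn : 1 ≤ n) (hhi : hi ≤ n - 1) (hlohi : lo ≤ hi)
    (h0 : 0 ≤ x) (hx1 : x < 1) :
    ∃ m, lo ≤ m ∧ m ≤ hi ∧ (∀ k, lo ≤ k → k < m → bp n k x ≤ bp n (k+1) x)
      ∧ (∀ k, m ≤ k → k < hi → bp n (k+1) x ≤ bp n k x) := by
  set F : ℕ := ⌊((n:ℝ)+1) * x⌋₊ with hF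
  refine ⟨max lo (min hi F), le_max_left _ _, max_le hlohi (min_le_left _ _), ?_, ?_⟩
  · intro k hk hkm
    have hkn : k < n := by omega
    apply bp_up hkn h0 hx1
    have hkF : k + 1 ≤ F := by omega
    have hcast : ((k:ℝ)+1) ≤ ((n:ℝ)+1) * x := by
      have h1 := Nat.floor_le (show (0:ℝ) ≤ ((n:ℝ)+1)*x by positivity)
      have h2 : ((k:ℝ)+1) ≤ (F:ℝ) := by exact_mod_cast hkF
      linarith
    nlinarith
  · intro k hkm hkhi
    have hkn : k < n := by omega
    apply bp_down hkn h0 hx1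
    have hkF : F ≤ k := by omega
    have hcast : ((n:ℝ)+1) * x < (k:ℝ)+1 := by
      have h1 := Nat.lt_floor_add_one (((n:ℝ)+1)*x)
      have h2 : (F:ℝ) ≤ (k:ℝ) := by exact_mod_cast hkF
      linarith
    nlinarith

lemma stirling_ge (j : ℕ) : Real.sqrt Real.pi ≤ stirlingSeq (j+1) := by
  have hten : Filter.Tendsto (stirlingSeq ∘ Nat.succ) Filter.atTop (nhds (Real.sqrt Real.pi)) :=
    tendsto_stirlingSeq_sqrt_pi.comp (Filter.tendsto_add_atTop_nat 1)
  exact stirlingSeq'_antitone.le_of_tendsto hten j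

lemma stirling_ge' {j : ℕ} (hj : 1 ≤ j) : Real.sqrt Real.pi ≤ stirlingSeq j := by
  obtain ⟨i, rfl⟩ := Nat.exists_eq_add_of_le hj
  simpa [Nat.add_comm] using stirling_ge i

lemma stirling_anti {i j : ℕ} (hi : 1 ≤ i) (hij : i ≤ j) : stirlingSeq j ≤ stirlingSeq i := by
  obtain ⟨i', rfl⟩ := Nat.exists_eq_add_of_le hi
  obtain ⟨j', rfl⟩ := Nat.exists_eq_add_of_le hij
  have := stirlingSeq'_antitone (show i' ≤ i' + j' by omega)
  simpa [Function.comp, Nat.succ_eq_add_one, Nat.add_comm, Nat.add_assoc, Nat.add_left_comm]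
    using this

lemma factorial_eq (j : ℕ) (hj : 1 ≤ j) :
    (Nat.factorial j : ℝ) = stirlingSeq j * (Real.sqrt (2*j) * ((j:ℝ)/Real.exp 1)^j) := by
  have h1 : (0:ℝ) < Real.sqrt (2*j) := Real.sqrt_pos.2 (by positivity)
  have h2 : (0:ℝ) < ((j:ℝ)/Real.exp 1)^j := by
    have : (0:ℝ) < (j:ℝ)/Real.exp 1 := by
      have : (0:ℝ) < (j:ℝ) := by exact_mod_cast hj
      positivity
    positivity
  rw [stirlingSeq]
  field_simp

lemma stirling_pos {j : ℕ} (hj : 1 ≤ j) : 0 < stirlingSeq j := by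
  obtain ⟨i, rfl⟩ := Nat.exists_eq_add_of_le hj
  simpa [Nat.add_comm] using stirlingSeq'_pos i

lemma amgm {n k : ℕ} {x : ℝ} (hk : 1 ≤ k) (hkn : k < n) (h0 : 0 ≤ x) (h1 : x ≤ 1) :
    x^k * (1-x)^(n-k) ≤ ((k:ℝ)/n)^k * ((((n-k:ℕ)):ℝ)/n)^(n-k) := by
  have hn0 : (0:ℝ) < n := by
    have : 0 < n := by omega
    exact_mod_cast this
  have hk0 : (0:ℝ) < k := by exact_mod_cast hk
  have hL0 : (0:ℝ) < ((n-k:ℕ):ℝ) := by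
    have : 0 < n - k := by omega
    exact_mod_cast this
  set L : ℝ := ((n-k:ℕ):ℝ) with hL
  have hLsum : (k:ℝ) + L = n := by
    rw [hL]; push_cast [Nat.cast_sub hkn.le]; ring
  have h1x : (0:ℝ) ≤ 1 - x := by linarith
  set p₁ : ℝ := (n:ℝ)*x/k with hp₁
  set p₂ : ℝ := (n:ℝ)*(1-x)/L with hp₂
  have hgm := Real.geom_mean_le_arith_mean2_weighted
    (show (0:ℝ) ≤ (k:ℝ)/n by positivity) (show (0:ℝ) ≤ L/n by positivity)
    (show (0:ℝ) ≤ p₁ by rw [hp₁]; positivity) (show (0:ℝ) ≤ p₂ by rw [hp₂]; positivity)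
    (show (k:ℝ)/n + L/n = 1 by rw [← add_div, hLsum, div_self hn0.ne'])
  have hsum : (k:ℝ)/n * p₁ + L/n * p₂ = 1 := by
    rw [hp₁, hp₂]; field_simp; linarith
  rw [hsum] at hgm
  -- raise to the n-th power
  have hpow : p₁^k * p₂^(n-k) ≤ 1 := by
    have hnn : (0:ℝ) ≤ p₁ ^ ((k:ℝ)/n) * p₂ ^ (L/n) := by
      have := Real.rpow_nonneg (show (0:ℝ) ≤ p₁ by rw [hp₁]; positivity) ((k:ℝ)/n)
      have := Real.rpow_nonneg (show (0:ℝ) ≤ p₂ by rw [hp₂]; positivity) (L/n)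
      positivity
    have := pow_le_pow_left₀ hnn hgm n
    rw [one_pow, mul_pow] at this
    calc p₁^k * p₂^(n-k)
        = (p₁ ^ ((k:ℝ)/n))^n * (p₂ ^ (L/n))^n := by
          rw [← Real.rpow_natCast (p₁ ^ ((k:ℝ)/n)) n, ← Real.rpow_natCast (p₂ ^ (L/n)) n,
            ← Real.rpow_mul (by rw [hp₁]; positivity), ← Real.rpow_mul (by rw [hp₂]; positivity)]
          rw [div_mul_cancel₀ _ hn0.ne', div_mul_cancel₀ _ hn0.ne']
          rw [Real.rpow_natCast, hL]
          rw [show (((n-k:ℕ)):ℝ) = ((n-k : ℕ):ℝ) from rfl]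
          rw [Real.rpow_natCast]
      _ ≤ 1 := this
  have hx_eq : x^k = p₁^k * ((k:ℝ)/n)^k := by
    rw [← mul_pow, hp₁]; congr 1; field_simp
  have h1x_eq : (1-x)^(n-k) = p₂^(n-k) * (L/n)^(n-k) := by
    rw [← mul_pow, hp₂]; congr 1; field_simp
  have hA : (0:ℝ) ≤ ((k:ℝ)/n)^k * (L/n)^(n-k) := by positivity
  calc x^k * (1-x)^(n-k) = (p₁^k * p₂^(n-k)) * (((k:ℝ)/n)^k * (L/n)^(n-k)) := by
        rw [hx_eq, h1x_eq]; ring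
    _ ≤ 1 * (((k:ℝ)/n)^k * (L/n)^(n-k)) := mul_le_mul_of_nonneg_right hpow hA
    _ = ((k:ℝ)/n)^k * (L/n)^(n-k) := one_mul _

lemma choose_bound {n k : ℕ} (hk : 1 ≤ k) (hkn : k < n) :
    (n.choose k : ℝ) * ((k:ℝ)/n)^k * (((n-k:ℕ):ℝ)/n)^(n-k)
      ≤ Real.sqrt (2*(n:ℝ)) / (stirlingSeq k * (2 * Real.sqrt ((k:ℝ)*((n-k:ℕ):ℝ)))) := by
  set E := Real.exp 1 with hE
  have hE0 : (0:ℝ) < E := Real.exp_pos 1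
  set L : ℕ := n - k with hLdef
  have hL1 : 1 ≤ L := by omega
  have hLn : L ≤ n := by omega
  have hkR : (0:ℝ) < (k:ℝ) := by exact_mod_cast hk
  have hLR : (0:ℝ) < (L:ℝ) := by exact_mod_cast hL1
  have hnR : (0:ℝ) < (n:ℝ) := by
    have : 0 < n := by omega
    exact_mod_cast this
  have kf := factorial_eq k hk
  have Lf := factorial_eq L hL1
  have nf := factorial_eq n (by omega)
  have hsn : stirlingSeq n ≤ stirlingSeq L := stirling_anti hL1 hLn
  have hsk : 0 < stirlingSeq k := stirling_pos hk
  have hsL : 0 < stirlingSeq L := stirling_pos hL1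
  have hak : 0 < Real.sqrt (2*(k:ℝ)) := Real.sqrt_pos.2 (by positivity)
  have haL : 0 < Real.sqrt (2*(L:ℝ)) := Real.sqrt_pos.2 (by positivity)
  have han : 0 < Real.sqrt (2*(n:ℝ)) := Real.sqrt_pos.2 (by positivity)
  have hPk : 0 < ((k:ℝ)/E)^k := by positivity
  have hPL : 0 < ((L:ℝ)/E)^(n-k) := by positivity
  have hPn : 0 < ((n:ℝ)/E)^n := by positivity
  have hfk : (0:ℝ) < (Nat.factorial k : ℝ) := by exact_mod_cast Nat.factorial_pos k
  have hfL : (0:ℝ) < (Nat.factorial L : ℝ) := by exact_mod_cast Nat.factorial_pos L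
  have hchoose : (n.choose k : ℝ) = (Nat.factorial n : ℝ)/((Nat.factorial k:ℝ) * (Nat.factorial L:ℝ)) := by
    rw [Nat.cast_choose ℝ hkn.le]
  have hnle : (Nat.factorial n : ℝ) ≤ stirlingSeq L * (Real.sqrt (2*(n:ℝ)) * ((n:ℝ)/E)^n) := by
    rw [nf]; exact mul_le_mul_of_nonneg_right hsn (by positivity)
  have hkey : ((n:ℝ)/E)^n * (((k:ℝ)/(n:ℝ))^k * ((L:ℝ)/(n:ℝ))^(n-k)) = ((k:ℝ)/E)^k * ((L:ℝ)/E)^(n-k) := by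
    have e1 : ((n:ℝ)/E)^n = ((n:ℝ)/E)^k * ((n:ℝ)/E)^(n-k) := by rw [← pow_add]; congr 1; omega
    rw [e1, show ((n:ℝ)/E)^k * ((n:ℝ)/E)^(n-k) * (((k:ℝ)/(n:ℝ))^k * ((L:ℝ)/(n:ℝ))^(n-k))
        = (((n:ℝ)/E) * ((k:ℝ)/(n:ℝ)))^k * (((n:ℝ)/E) * ((L:ℝ)/(n:ℝ)))^(n-k) by
      rw [mul_pow, mul_pow]; ring]
    congr 2 <;> (field_simp; try ring)
  have step1 : (n.choose k : ℝ) * ((k:ℝ)/(n:ℝ))^k * ((L:ℝ)/(n:ℝ))^(n-k)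
      ≤ (stirlingSeq L * (Real.sqrt (2*(n:ℝ)) * ((n:ℝ)/E)^n)) * (((k:ℝ)/(n:ℝ))^k * ((L:ℝ)/(n:ℝ))^(n-k)) / ((Nat.factorial k:ℝ) * (Nat.factorial L:ℝ)) := by
    rw [hchoose, div_mul_eq_mul_div, div_mul_eq_mul_div, mul_assoc]
    apply div_le_div_of_nonneg_right ?_ (by positivity)
    exact mul_le_mul_of_nonneg_right hnle (by positivity)
  have step2 : (stirlingSeq L * (Real.sqrt (2*(n:ℝ)) * ((n:ℝ)/E)^n)) * (((k:ℝ)/(n:ℝ))^k * ((L:ℝ)/(n:ℝ))^(n-k)) / ((Nat.factorial k:ℝ) * (Nat.factorial L:ℝ))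
      = Real.sqrt (2*(n:ℝ)) / (stirlingSeq k * (Real.sqrt (2*(k:ℝ)) * Real.sqrt (2*(L:ℝ)))) := by
    rw [kf, Lf,
      show (stirlingSeq L * (Real.sqrt (2*(n:ℝ)) * ((n:ℝ)/E)^n)) * (((k:ℝ)/(n:ℝ))^k * ((L:ℝ)/(n:ℝ))^(n-k))
        = stirlingSeq L * Real.sqrt (2*(n:ℝ)) * (((n:ℝ)/E)^n * (((k:ℝ)/(n:ℝ))^k * ((L:ℝ)/(n:ℝ))^(n-k))) by ring,
      hkey]
    field_simp
    simp only [hE, Real.exp_one_pow, ← hLdef]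
  have hab : Real.sqrt (2*(k:ℝ)) * Real.sqrt (2*(L:ℝ)) = 2 * Real.sqrt ((k:ℝ)*(L:ℝ)) := by
    rw [← Real.sqrt_mul (by positivity), show (2*(k:ℝ))*(2*(L:ℝ)) = 4 * ((k:ℝ)*(L:ℝ)) by ring,
      Real.sqrt_mul (by norm_num),
      show Real.sqrt 4 = 2 by rw [show (4:ℝ)=2^2 by norm_num, Real.sqrt_sq (by norm_num)]]
  calc (n.choose k : ℝ) * ((k:ℝ)/(n:ℝ))^k * ((L:ℝ)/(n:ℝ))^(n-k) ≤ _ := step1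
    _ = Real.sqrt (2*(n:ℝ)) / (stirlingSeq k * (Real.sqrt (2*(k:ℝ)) * Real.sqrt (2*(L:ℝ)))) := step2
    _ = Real.sqrt (2*(n:ℝ)) / (stirlingSeq k * (2 * Real.sqrt ((k:ℝ)*(L:ℝ)))) := by rw [hab]

lemma bp_half {n k : ℕ} {x : ℝ} (hk : 1 ≤ k) (h2k : 2*k ≤ n) (h0 : 0 ≤ x) (h1 : x ≤ 1) :
    bp n k x ≤ 1 / Real.sqrt (2*((k:ℝ)+1)) := by
  have hkn : k < n := by omega
  by_cases hsp : k = 1 ∧ n = 2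
  · obtain ⟨rfl, rfl⟩ := hsp
    have h4 : Real.sqrt (2*((1:ℕ):ℝ)+2) = 2 := by
      norm_num
    have : bp 2 1 x = 2 * x * (1-x) := by unfold bp; norm_num
    rw [this, show (2:ℝ)*(((1:ℕ):ℝ)+1) = 2*((1:ℕ):ℝ)+2 by ring, h4]
    nlinarith [sq_nonneg (2*x - 1)]
  -- main case
  have hπ : (3:ℝ) ≤ Real.pi := by linarith [Real.pi_gt_three]
  set L : ℕ := n - k with hLdef
  have hL1 : 1 ≤ L := by omega
  have hkR : (1:ℝ) ≤ (k:ℝ) := by exact_mod_cast hk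
  have hLR : (1:ℝ) ≤ (L:ℝ) := by exact_mod_cast hL1
  have hnR : (0:ℝ) < (n:ℝ) := by
    have : 0 < n := by omega
    exact_mod_cast this
  have hcase : ((k:ℝ)+1) * (n:ℝ) ≤ Real.pi * ((k:ℝ) * (L:ℝ)) := by
    have hLcast : (L:ℝ) = (n:ℝ) - (k:ℝ) := by
      rw [hLdef]; push_cast [Nat.cast_sub hkn.le]; ring
    have h2k' : 2*(k:ℝ) ≤ (n:ℝ) := by exact_mod_cast h2k
    rcases eq_or_lt_of_le hk with h1k | h2le
    · -- k = 1, n ≥ 3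
      have hn3 : 3 ≤ n := by omega
      have hn3' : (3:ℝ) ≤ (n:ℝ) := by exact_mod_cast hn3
      have hk1 : (k:ℝ) = 1 := by exact_mod_cast h1k.symm
      rw [hk1, hLcast]
      nlinarith [mul_nonneg (sub_nonneg.2 hπ) (by linarith : (0:ℝ) ≤ (n:ℝ)-1)]
    · have hk2 : (2:ℝ) ≤ (k:ℝ) := by exact_mod_cast h2le
      rw [hLcast]
      nlinarith [mul_nonneg (sub_nonneg.2 hπ) (mul_nonneg (by linarith : (0:ℝ) ≤ (k:ℝ)) (by linarith : (0:ℝ) ≤ (n:ℝ)-(k:ℝ))),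
        mul_nonneg (by linarith : (0:ℝ) ≤ (n:ℝ)-2*(k:ℝ)) (by linarith : (0:ℝ) ≤ 2*(k:ℝ)-1),
        mul_nonneg (by linarith : (0:ℝ) ≤ (k:ℝ)) (by linarith : (0:ℝ) ≤ (k:ℝ)-2)]
  have main : bp n k x ≤ Real.sqrt (2*(n:ℝ)) / (stirlingSeq k * (2 * Real.sqrt ((k:ℝ)*((L:ℕ):ℝ)))) := by
    have ham := amgm hk hkn h0 h1
    have hcb := choose_bound hk hkn
    have hcnn : (0:ℝ) ≤ (n.choose k:ℝ) := by positivity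
    calc bp n k x = (n.choose k : ℝ) * (x^k * (1-x)^(n-k)) := by unfold bp; ring
      _ ≤ (n.choose k : ℝ) * (((k:ℝ)/n)^k * (((L:ℕ):ℝ)/n)^(n-k)) := mul_le_mul_of_nonneg_left ham hcnn
      _ = (n.choose k : ℝ) * ((k:ℝ)/n)^k * (((L:ℕ):ℝ)/n)^(n-k) := by ring
      _ ≤ _ := hcb
  have hKL : (0:ℝ) < (k:ℝ) * (L:ℝ) := by positivity
  have hsqKL : 0 < Real.sqrt ((k:ℝ)*(L:ℝ)) := Real.sqrt_pos.2 hKL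
  have hsπ : 0 < Real.sqrt Real.pi := Real.sqrt_pos.2 Real.pi_pos
  have step3 : Real.sqrt (2*(n:ℝ)) / (stirlingSeq k * (2 * Real.sqrt ((k:ℝ)*(L:ℝ))))
      ≤ Real.sqrt (2*(n:ℝ)) / (Real.sqrt Real.pi * (2 * Real.sqrt ((k:ℝ)*(L:ℝ)))) := by
    gcongr <;> first
    | exact stirling_ge' hk
    | positivity
  have step4 : Real.sqrt (2*(n:ℝ)) / (Real.sqrt Real.pi * (2 * Real.sqrt ((k:ℝ)*(L:ℝ))))
      ≤ 1 / Real.sqrt (2*((k:ℝ)+1)) := by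
    rw [div_le_div_iff₀ (by positivity) (by positivity)]
    have lhs_eq : Real.sqrt (2*(n:ℝ)) * Real.sqrt (2*((k:ℝ)+1)) = Real.sqrt ((2*(n:ℝ))*(2*((k:ℝ)+1))) := by
      rw [← Real.sqrt_mul (by positivity)]
    have rhs_eq : Real.sqrt Real.pi * (2 * Real.sqrt ((k:ℝ)*(L:ℝ))) = Real.sqrt (Real.pi * (4 * ((k:ℝ)*(L:ℝ)))) := by
      rw [Real.sqrt_mul (le_of_lt Real.pi_pos), Real.sqrt_mul (by norm_num : (0:ℝ) ≤ 4),
        show Real.sqrt 4 = 2 by rw [show (4:ℝ)=2^2 by norm_num, Real.sqrt_sq (by norm_num)]]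
    rw [lhs_eq, one_mul, rhs_eq]
    apply Real.sqrt_le_sqrt
    nlinarith
  exact main.trans (step3.trans step4)

lemma bp_symm {n k : ℕ} (hk : k ≤ n) (x : ℝ) : bp n k x = bp n (n-k) (1-x) := by
  unfold bp
  rw [← Nat.choose_symm hk, show (1:ℝ) - (1-x) = x by ring, show n - (n-k) = k by omega]
  ring

lemma bp_peak_bound {n k t' : ℕ} {x : ℝ} (hk1 : 1 ≤ k) (hk2 : k + 1 ≤ n)
    (ht1 : t' ≤ k) (ht2 : t' ≤ n - k) (h0 : 0 ≤ x) (h1 : x ≤ 1) :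
    bp n k x ≤ 1 / Real.sqrt (2*((t':ℝ)+1)) := by
  have mono : ∀ j : ℕ, t' ≤ j → 1 / Real.sqrt (2*((j:ℝ)+1)) ≤ 1 / Real.sqrt (2*((t':ℝ)+1)) := by
    intro j hj
    apply one_div_le_one_div_of_le (by positivity)
    apply Real.sqrt_le_sqrt
    have : ((t':ℕ):ℝ) ≤ (j:ℝ) := by exact_mod_cast hj
    linarith
  rcases le_or_gt (2*k) n with h | h
  · exact (bp_half hk1 h h0 h1).trans (mono k ht1)
  · rw [bp_symm (by omega : k ≤ n) x]
    exact (bp_half (by omega : 1 ≤ n - k) (by omega : 2*(n-k) ≤ n)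
      (by linarith) (by linarith)).trans (mono (n-k) ht2)
lemma bernstein_bound {f : ℝ → ℝ} (hf : ContinuousOn f (Set.Icc (0:ℝ) 1)) {n : ℕ}
    (hn : 1 ≤ n) {x : ℝ} (hx0 : 0 ≤ x) (hx1 : x ≤ 1) :
    |f x - ∑ k ∈ range (n+1), f ((k:ℝ)/n) * bp n k x|
      ≤ 5/4 * modCont f ((n:ℝ) ^ (-(1/2:ℝ))) := by
  have hn0 : (0:ℝ) < n := by exact_mod_cast hn
  set δ : ℝ := (n:ℝ) ^ (-(1/2:ℝ)) with hδdef
  have hδ : 0 < δ := Real.rpow_pos_of_pos hn0 _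
  have hω := modCont_nonneg hf hδ.le
  have hδsq : δ^2 = ((n:ℝ))⁻¹ := by
    rw [hδdef, ← Real.rpow_natCast ((n:ℝ) ^ (-(1/2:ℝ))) 2, ← Real.rpow_mul hn0.le,
      show (-(1/2:ℝ)) * ((2:ℕ):ℝ) = -1 by push_cast; norm_num, Real.rpow_neg_one]
  have hsplit : f x - ∑ k ∈ range (n+1), f ((k:ℝ)/n) * bp n k x
      = ∑ k ∈ range (n+1), (f x - f ((k:ℝ)/n)) * bp n k x := by
    have e : ∑ k ∈ range (n+1), (f x - f ((k:ℝ)/n)) * bp n k x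
        = (∑ k ∈ range (n+1), f x * bp n k x) - ∑ k ∈ range (n+1), f ((k:ℝ)/n) * bp n k x := by
      rw [← Finset.sum_sub_distrib]
      exact Finset.sum_congr rfl fun k _ => by ring
    rw [e, ← Finset.mul_sum, bp_sum, mul_one]
  rw [hsplit]
  have habs : |∑ k ∈ range (n+1), (f x - f ((k:ℝ)/n)) * bp n k x|
      ≤ ∑ k ∈ range (n+1), (1 + (x - (k:ℝ)/n)^2 * n) * modCont f δ * bp n k x := by
    refine (Finset.abs_sum_le_sum_abs _ _).trans (Finset.sum_le_sum ?_)
    intro k hk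
    rw [Finset.mem_range] at hk
    have hkn : (k:ℝ)/n ∈ Set.Icc (0:ℝ) 1 := by
      constructor
      · positivity
      · rw [div_le_one hn0]
        exact_mod_cast Nat.lt_succ_iff.1 hk
    have hb : 0 ≤ bp n k x := bp_nonneg hx0 hx1
    rw [abs_mul, abs_of_nonneg hb]
    refine mul_le_mul_of_nonneg_right ?_ hb
    have hq := modCont_quad hf hδ (Set.mem_Icc.2 ⟨hx0, hx1⟩) hkn
    calc |f x - f ((k:ℝ)/n)| ≤ (1 + ((x - (k:ℝ)/n)/δ)^2) * modCont f δ := hq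
      _ = (1 + (x - (k:ℝ)/n)^2 * n) * modCont f δ := by
          rw [div_pow, hδsq, div_eq_mul_inv, inv_inv]
  have hsum : ∑ k ∈ range (n+1), (1 + (x - (k:ℝ)/n)^2 * (n:ℝ)) * modCont f δ * bp n k x
      = (1 + x*(1-x)) * modCont f δ := by
    have hvar := bp_var n x
    have e : ∀ k : ℕ, (1 + (x - (k:ℝ)/n)^2 * (n:ℝ)) * modCont f δ * bp n k x
        = modCont f δ * bp n k x + (modCont f δ / n) * (((n:ℝ)*x - k)^2 * bp n k x) := by
      intro k
      have h1 : (x - (k:ℝ)/n)^2 * (n:ℝ) = ((n:ℝ)*x - k)^2 / n := by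
        field_simp
      rw [h1]
      field_simp
    rw [Finset.sum_congr rfl (fun k _ => e k), Finset.sum_add_distrib, ← Finset.mul_sum,
      ← Finset.mul_sum, bp_sum, hvar]
    field_simp
  calc |∑ k ∈ range (n+1), (f x - f ((k:ℝ)/n)) * bp n k x|
      ≤ ∑ k ∈ range (n+1), (1 + (x - (k:ℝ)/n)^2 * n) * modCont f δ * bp n k x := habs
    _ = (1 + x*(1-x)) * modCont f δ := hsum
    _ ≤ 5/4 * modCont f δ := by nlinarith [sq_nonneg (2*x-1)]

lemma mid_bound {n lo hi : ℕ} (hlo : 1 ≤ lo) (hhi : hi + 1 ≤ n) (hlohi : lo ≤ hi)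
    (ε D : ℕ → ℝ) (hεD : ∀ k, lo ≤ k → k ≤ hi → ε k = D k - D (k-1))
    (hDb : ∀ k, |D k| ≤ 1/2) (hD0 : D (lo - 1) = 0)
    {x : ℝ} (h0 : 0 ≤ x) (hx1 : x < 1) :
    ∃ m, lo ≤ m ∧ m ≤ hi ∧ |∑ k ∈ Finset.Icc lo hi, ε k * bp n k x| ≤ bp n m x := by
  have hn1 : 1 ≤ n := by omega
  obtain ⟨m, hm1, hm2, hup, hdown⟩ :=
    bp_unimodal (n:=n) (lo:=lo) (hi:=hi) hn1 (by omega) hlohi h0 hx1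
  refine ⟨m, hm1, hm2, ?_⟩
  set c : ℕ → ℝ := fun k => bp n k x with hc
  have hcnn : ∀ k, 0 ≤ c k := fun k => bp_nonneg h0 hx1.le
  have e1 : ∑ k ∈ Finset.Icc lo hi, ε k * c k = ∑ k ∈ Finset.Icc lo hi, (D k - D (k-1)) * c k :=
    Finset.sum_congr rfl fun k hk => by
      rw [Finset.mem_Icc] at hk
      rw [hεD k hk.1 hk.2]
  have e2 : (∑ k ∈ Finset.Icc lo hi, ε k * bp n k x) = ∑ k ∈ Finset.Icc lo hi, ε k * c k := rfl
  rw [e2, e1, abel_sum D c hlo hlohi hD0]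
  have htv := tv c hm1 hm2 hup hdown
  calc |∑ k ∈ Finset.Ico lo hi, D k * (c k - c (k+1)) + D hi * c hi|
      ≤ |∑ k ∈ Finset.Ico lo hi, D k * (c k - c (k+1))| + |D hi * c hi| := abs_add_le _ _
    _ ≤ (∑ k ∈ Finset.Ico lo hi, (1/2) * |c k - c (k+1)|) + (1/2) * c hi := by
        refine add_le_add ((Finset.abs_sum_le_sum_abs _ _).trans (Finset.sum_le_sum ?_)) ?_
        · intro k _
          rw [abs_mul]
          exact mul_le_mul_of_nonneg_right (hDb k) (abs_nonneg _)
        · rw [abs_mul, abs_of_nonneg (hcnn hi)]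
          exact mul_le_mul_of_nonneg_right (hDb hi) (hcnn hi)
    _ = (1/2) * ((∑ k ∈ Finset.Ico lo hi, |c k - c (k+1)|) + c hi) := by
        rw [← Finset.mul_sum]; ring
    _ = (1/2) * ((c m - c lo) + (c m - c hi) + c hi) := by rw [htv]
    _ ≤ c m := by linarith [hcnn lo]
theorem main_theorem_general (f : ℝ → ℝ) (hf : ContinuousOn f (Set.Icc (0:ℝ) 1))
    (hf0 : ∃ a : ℤ, f 0 = (a : ℝ)) (hf1 : ∃ b : ℤ, f 1 = (b : ℝ))
    (n : ℕ) (hn : 2 ≤ n) (t : ℕ) (ht : 2 * t ≤ n) :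
    ∃ q : ℕ → ℤ, ∀ x ∈ Set.Icc (0:ℝ) 1,
      |f x - ∑ k ∈ Finset.range (n + 1),
          (q k : ℝ) * ((n.choose k : ℝ) * x ^ k * (1 - x) ^ (n - k))|
        ≤ 5 / 4 * modCont f ((n : ℝ) ^ (-(1/2 : ℝ)))
          + max (modCont f ((t : ℝ) / n)) (1 / (2 * ((n : ℝ) + 1 - 2 * t)))
          + 1 / Real.sqrt (2 * ((t : ℝ) + 1)) := by
  obtain ⟨A, hA⟩ := hf0
  obtain ⟨B, hB⟩ := hf1
  have hn0 : (0:ℝ) < n := by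
    have : 0 < n := by omega
    exact_mod_cast this
  set t' : ℕ := max t 1 with ht'def
  have ht'1 : 1 ≤ t' := le_max_right _ _
  have htt'  : t ≤ t' := le_max_left _ _
  have htt'' : t' - 1 ≤ t := by
    rw [ht'def]; rcases le_total t 1 with h | h
    · rw [max_eq_right h]; omega
    · rw [max_eq_left h]; omega
  have h2t' : 2 * t' ≤ n := by
    rw [ht'def]; rcases le_total t 1 with h | h
    · rw [max_eq_right h]; omega
    · rw [max_eq_left h]; omega
  set S : ℕ → ℝ := fun k => ∑ j ∈ Finset.Icc t' k, f ((j:ℝ)/n) with hS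
  set D : ℕ → ℝ := fun k => S k - round (S k) with hD
  set q : ℕ → ℤ := fun k => if k < t' then A + round (f ((k:ℝ)/n) - (A:ℝ))
    else if k ≤ n - t' then round (S k) - round (S (k-1))
    else B + round (f ((k:ℝ)/n) - (B:ℝ)) with hq
  have hω2 : 0 ≤ modCont f ((t:ℝ)/n) := modCont_nonneg hf (by positivity)
  have hωδ : 0 ≤ modCont f ((n:ℝ) ^ (-(1/2:ℝ))) :=
    modCont_nonneg hf (Real.rpow_pos_of_pos hn0 _).le
  have hmax0 : 0 ≤ max (modCont f ((t:ℝ)/n)) (1/(2*((n:ℝ)+1-2*t))) :=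
    le_trans hω2 (le_max_left _ _)
  have hsq0 : (0:ℝ) ≤ 1/Real.sqrt (2*((t:ℝ)+1)) := by positivity
  have hqn : q n = B := by
    simp only [hq]
    rw [if_neg (by omega), if_neg (by omega)]
    rw [show ((n:ℕ):ℝ)/(n:ℝ) = 1 from div_self hn0.ne', hB]
    simp
  refine ⟨q, ?_⟩
  intro x hx
  obtain ⟨hx0, hx1⟩ := hx
  rcases eq_or_lt_of_le hx1 with hxe | hxlt
  · -- x = 1
    subst hxe
    have hsum1 : ∑ k ∈ Finset.range (n+1),
        (q k : ℝ) * ((n.choose k : ℝ) * (1:ℝ) ^ k * (1 - 1) ^ (n - k)) = (q n : ℝ) := by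
      rw [Finset.sum_eq_single n]
      · simp
      · intro b hb hbn
        have hnb : n - b ≠ 0 := by rw [Finset.mem_range] at hb; omega
        simp [hnb]
      · intro hn'
        exact absurd (Finset.self_mem_range_succ n) hn'
    rw [hsum1, hqn, hB]
    simp only [sub_self, abs_zero]
    linarith
  -- main case : x < 1
  have hbp_nn : ∀ k, 0 ≤ bp n k x := fun k => bp_nonneg hx0 hx1
  set g : ℕ → ℝ := fun k => (f ((k:ℝ)/n) - (q k : ℝ)) * bp n k x with hg
  have hgoal : f x - ∑ k ∈ Finset.range (n+1),
        (q k : ℝ) * ((n.choose k : ℝ) * x ^ k * (1 - x) ^ (n - k))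
      = (f x - ∑ k ∈ Finset.range (n+1), f ((k:ℝ)/n) * bp n k x)
        + ∑ k ∈ Finset.range (n+1), g k := by
    have e : ∑ k ∈ Finset.range (n+1), g k
        = (∑ k ∈ Finset.range (n+1), f ((k:ℝ)/n) * bp n k x)
          - ∑ k ∈ Finset.range (n+1), (q k : ℝ) * bp n k x := by
      rw [← Finset.sum_sub_distrib]
      exact Finset.sum_congr rfl fun k _ => by rw [hg]; ring
    have e2 : ∑ k ∈ Finset.range (n+1),
        (q k : ℝ) * ((n.choose k : ℝ) * x ^ k * (1 - x) ^ (n - k))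
        = ∑ k ∈ Finset.range (n+1), (q k : ℝ) * bp n k x := rfl
    rw [e2, e]
    ring
  have hsplit : ∑ k ∈ Finset.range (n+1), g k
      = (∑ k ∈ Finset.Ico 0 t', g k) + (∑ k ∈ Finset.Icc t' (n-t'), g k)
        + (∑ k ∈ Finset.Ico (n-t'+1) (n+1), g k) := by
    rw [Finset.range_eq_Ico,
      ← Finset.sum_Ico_consecutive g (Nat.zero_le t') (by omega : t' ≤ n+1),
      ← Finset.sum_Ico_consecutive g (by omega : t' ≤ n-t'+1) (by omega : n-t'+1 ≤ n+1),
      Finset.Ico_add_one_right_eq_Icc]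
    ring
  -- mid part
  have hmidε : ∀ k, t' ≤ k → k ≤ n - t' →
      f ((k:ℝ)/n) - (q k : ℝ) = D k - D (k-1) := by
    intro k h1 h2
    have hqk : q k = round (S k) - round (S (k-1)) := by
      simp only [hq]
      rw [if_neg (by omega), if_pos h2]
    rw [hqk]
    push_cast
    have hSk : S k = S (k-1) + f ((k:ℝ)/n) := by
      simp only [hS]
      have hk1 : k - 1 + 1 = k := by omega
      rw [← hk1, Finset.sum_Icc_succ_top (by omega : t' ≤ k - 1 + 1), hk1]
    simp only [hD]
    rw [hSk]
    ring
  have hDb : ∀ k, |D k| ≤ 1/2 := fun k => by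
    simp only [hD]; exact abs_sub_round _
  have hD0 : D (t' - 1) = 0 := by
    simp only [hD, hS]
    rw [Finset.Icc_eq_empty (by omega : ¬ t' ≤ t' - 1)]
    simp
  obtain ⟨m, hm1, hm2, hmid⟩ := mid_bound ht'1 (by omega : (n - t') + 1 ≤ n)
    (by omega : t' ≤ n - t') (fun k => f ((k:ℝ)/n) - (q k : ℝ)) D hmidε hDb hD0 hx0 hxlt
  have hmid' : |∑ k ∈ Finset.Icc t' (n-t'), g k| ≤ 1 / Real.sqrt (2*((t:ℝ)+1)) := by
    refine le_trans ?_ ((bp_peak_bound (t':=t) (by omega : 1 ≤ m) (by omega : m + 1 ≤ n)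
      (by omega : t ≤ m) (by omega : t ≤ n - m) hx0 hx1).trans ?_)
    · exact hmid
    · exact le_refl _
  -- end parts
  have hend_lo : ∀ k ∈ Finset.Ico 0 t', |f ((k:ℝ)/n) - (q k : ℝ)| ≤ modCont f ((t:ℝ)/n) := by
    intro k hk
    rw [Finset.mem_Ico] at hk
    have hqk : q k = A + round (f ((k:ℝ)/n) - (A:ℝ)) := by
      simp only [hq]; rw [if_pos hk.2]
    rw [hqk]
    push_cast
    rw [show f ((k:ℝ)/n) - ((A:ℝ) + (round (f ((k:ℝ)/n) - (A:ℝ)) : ℝ))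
        = (f ((k:ℝ)/n) - (A:ℝ)) - (round (f ((k:ℝ)/n) - (A:ℝ)) : ℝ) by ring]
    calc |(f ((k:ℝ)/n) - (A:ℝ)) - (round (f ((k:ℝ)/n) - (A:ℝ)) : ℝ)|
        ≤ |(f ((k:ℝ)/n) - (A:ℝ)) - ((0:ℤ):ℝ)| := round_le _ 0
      _ = |f ((k:ℝ)/n) - f 0| := by rw [hA]; simp
      _ ≤ modCont f ((t:ℝ)/n) := by
          apply modCont_pair hf
          · constructor
            · positivity
            · rw [div_le_one hn0]
              have : k ≤ n := by omega
              exact_mod_cast this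
          · exact Set.mem_Icc.2 ⟨le_refl 0, zero_le_one⟩
          · rw [sub_zero, abs_of_nonneg (by positivity)]
            have hkt : (k:ℝ) ≤ (t:ℝ) := by
              have : k ≤ t := by omega
              exact_mod_cast this
            gcongr
  have hend_hi : ∀ k ∈ Finset.Ico (n-t'+1) (n+1),
      |f ((k:ℝ)/n) - (q k : ℝ)| ≤ modCont f ((t:ℝ)/n) := by
    intro k hk
    rw [Finset.mem_Ico] at hk
    have hqk : q k = B + round (f ((k:ℝ)/n) - (B:ℝ)) := by
      simp only [hq]; rw [if_neg (by omega), if_neg (by omega)]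
    rw [hqk]
    push_cast
    rw [show f ((k:ℝ)/n) - ((B:ℝ) + (round (f ((k:ℝ)/n) - (B:ℝ)) : ℝ))
        = (f ((k:ℝ)/n) - (B:ℝ)) - (round (f ((k:ℝ)/n) - (B:ℝ)) : ℝ) by ring]
    have hkn : (k:ℝ) ≤ n := by
      have : k ≤ n := by omega
      exact_mod_cast this
    calc |(f ((k:ℝ)/n) - (B:ℝ)) - (round (f ((k:ℝ)/n) - (B:ℝ)) : ℝ)|
        ≤ |(f ((k:ℝ)/n) - (B:ℝ)) - ((0:ℤ):ℝ)| := round_le _ 0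
      _ = |f ((k:ℝ)/n) - f 1| := by rw [hB]; simp
      _ ≤ modCont f ((t:ℝ)/n) := by
          apply modCont_pair hf
          · constructor
            · positivity
            · rw [div_le_one hn0]; exact hkn
          · exact Set.mem_Icc.2 ⟨zero_le_one, le_refl 1⟩
          · rw [abs_sub_comm, abs_of_nonneg (by rw [sub_nonneg, div_le_one hn0]; exact hkn)]
            have e : 1 - (k:ℝ)/n = ((n:ℝ) - k)/n := by field_simp
            rw [e]
            have hnk : (n:ℝ) - k ≤ t := by
              have h1 : n - k ≤ t := by omega
              have h2 : ((n - k : ℕ):ℝ) = (n:ℝ) - k := by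
                push_cast [Nat.cast_sub (by omega : k ≤ n)]; ring
              rw [← h2]
              exact_mod_cast h1
            gcongr
  have habs_lo : |∑ k ∈ Finset.Ico 0 t', g k|
      ≤ modCont f ((t:ℝ)/n) * ∑ k ∈ Finset.Ico 0 t', bp n k x := by
    refine (Finset.abs_sum_le_sum_abs _ _).trans ?_
    rw [Finset.mul_sum]
    refine Finset.sum_le_sum fun k hk => ?_
    rw [hg]
    rw [abs_mul, abs_of_nonneg (hbp_nn k)]
    exact mul_le_mul_of_nonneg_right (hend_lo k hk) (hbp_nn k)
  have habs_hi : |∑ k ∈ Finset.Ico (n-t'+1) (n+1), g k|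
      ≤ modCont f ((t:ℝ)/n) * ∑ k ∈ Finset.Ico (n-t'+1) (n+1), bp n k x := by
    refine (Finset.abs_sum_le_sum_abs _ _).trans ?_
    rw [Finset.mul_sum]
    refine Finset.sum_le_sum fun k hk => ?_
    rw [hg]
    rw [abs_mul, abs_of_nonneg (hbp_nn k)]
    exact mul_le_mul_of_nonneg_right (hend_hi k hk) (hbp_nn k)
  have hbp_split : (∑ k ∈ Finset.Ico 0 t', bp n k x)
      + (∑ k ∈ Finset.Ico (n-t'+1) (n+1), bp n k x) ≤ 1 := by
    have h1 := bp_sum n x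
    have h2 : ∑ k ∈ Finset.range (n+1), bp n k x
        = (∑ k ∈ Finset.Ico 0 t', bp n k x) + (∑ k ∈ Finset.Icc t' (n-t'), bp n k x)
          + (∑ k ∈ Finset.Ico (n-t'+1) (n+1), bp n k x) := by
      rw [Finset.range_eq_Ico,
        ← Finset.sum_Ico_consecutive _ (Nat.zero_le t') (by omega : t' ≤ n+1),
        ← Finset.sum_Ico_consecutive _ (by omega : t' ≤ n-t'+1) (by omega : n-t'+1 ≤ n+1),
        Finset.Ico_add_one_right_eq_Icc]
      ring
    have h3 : 0 ≤ ∑ k ∈ Finset.Icc t' (n-t'), bp n k x :=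
      Finset.sum_nonneg fun k _ => hbp_nn k
    rw [h2] at h1
    linarith
  have hends : |∑ k ∈ Finset.Ico 0 t', g k| + |∑ k ∈ Finset.Ico (n-t'+1) (n+1), g k|
      ≤ modCont f ((t:ℝ)/n) := by
    have h4 : modCont f ((t:ℝ)/n) * ((∑ k ∈ Finset.Ico 0 t', bp n k x)
        + (∑ k ∈ Finset.Ico (n-t'+1) (n+1), bp n k x)) ≤ modCont f ((t:ℝ)/n) * 1 :=
      mul_le_mul_of_nonneg_left hbp_split hω2
    rw [mul_one] at h4
    nlinarith [habs_lo, habs_hi]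
  have hbern := bernstein_bound hf (by omega : 1 ≤ n) hx0 hx1
  have hgbound : |∑ k ∈ Finset.range (n+1), g k|
      ≤ modCont f ((t:ℝ)/n) + 1 / Real.sqrt (2*((t:ℝ)+1)) := by
    rw [hsplit]
    calc |(∑ k ∈ Finset.Ico 0 t', g k) + (∑ k ∈ Finset.Icc t' (n-t'), g k)
          + (∑ k ∈ Finset.Ico (n-t'+1) (n+1), g k)|
        ≤ |(∑ k ∈ Finset.Ico 0 t', g k) + (∑ k ∈ Finset.Icc t' (n-t'), g k)|
          + |∑ k ∈ Finset.Ico (n-t'+1) (n+1), g k| := abs_add_le _ _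
      _ ≤ |∑ k ∈ Finset.Ico 0 t', g k| + |∑ k ∈ Finset.Icc t' (n-t'), g k|
          + |∑ k ∈ Finset.Ico (n-t'+1) (n+1), g k| := by
          linarith [abs_add_le (∑ k ∈ Finset.Ico 0 t', g k) (∑ k ∈ Finset.Icc t' (n-t'), g k)]
      _ ≤ modCont f ((t:ℝ)/n) + 1 / Real.sqrt (2*((t:ℝ)+1)) := by
          linarith [hends, hmid']
  calc |f x - ∑ k ∈ Finset.range (n + 1),
          (q k : ℝ) * ((n.choose k : ℝ) * x ^ k * (1 - x) ^ (n - k))|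
      = |(f x - ∑ k ∈ Finset.range (n+1), f ((k:ℝ)/n) * bp n k x)
          + ∑ k ∈ Finset.range (n+1), g k| := by rw [hgoal]
    _ ≤ |f x - ∑ k ∈ Finset.range (n+1), f ((k:ℝ)/n) * bp n k x|
          + |∑ k ∈ Finset.range (n+1), g k| := abs_add_le _ _
    _ ≤ 5/4 * modCont f ((n:ℝ) ^ (-(1/2:ℝ)))
          + (modCont f ((t:ℝ)/n) + 1 / Real.sqrt (2*((t:ℝ)+1))) := add_le_add hbern hgbound
    _ ≤ 5 / 4 * modCont f ((n : ℝ) ^ (-(1/2 : ℝ)))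
          + max (modCont f ((t : ℝ) / n)) (1 / (2 * ((n : ℝ) + 1 - 2 * t)))
          + 1 / Real.sqrt (2 * ((t : ℝ) + 1)) := by
        have hle := le_max_left (modCont f ((t:ℝ)/n)) (1/(2*((n:ℝ)+1-2*(t:ℝ))))
        linarith
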